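/- Let D be a monotone nondecreasing deadline function and let ℒ be any countable language collection containing a measure-zero chain {L^∞} ∪ {L^j : j ≥ 1}. For every randomized generator 𝒜 satisfying sup_{K∈ℒ} sup_{E∈ℰ(K)} H_𝒜^{ℒ,K,E}(t) = o(D^{−1}(t)/t) as t → ∞, there exists a total enumeration X^∞ ∈ ℰ(L^∞) such that, almost surely over the generator's internal randomness, liminf_{i→∞} μ^pfx_i(𝒜(X^∞),L^∞,D) = 0; since μ^el_i ≤ μ^pfx_i, also liminf_{i→∞} μ^el_i(𝒜(X^∞),L^∞,D) = 0 almost surely. -/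

import Mathlib

open MeasureTheory Filter
open scoped Classical

noncomputable section

/-- The output `o_t` (for `t ≥ 1`) of a generator with next-output function `g`
on the input sequence `X` (indexed from 1): `o_t = g [x_1, …, x_t]`. -/
def outSeq (g : List ℕ → ℕ) (X : ℕ → ℕ) (t : ℕ) : ℕ :=
  g ((List.range t).map fun s => X (s + 1))

/-- The output prefix set `𝒜(X)_t = {o_1, …, o_t}`. -/
def outUpTo (g : List ℕ → ℕ) (X : ℕ → ℕ) (t : ℕ) : Finset ℕ :=
  (Finset.Icc 1 t).image (outSeq g X)

/-- The observed strings `{x_1, …, x_t}`. -/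
def obsUpTo (X : ℕ → ℕ) (t : ℕ) : Finset ℕ :=
  (Finset.Icc 1 t).image X

/-- Validity constraint on a generator: each output is a fresh string, i.e.
`o_t ∉ {x_1,…,x_t} ∪ {o_1,…,o_{t−1}}`. -/
def ValidGen (g : List ℕ → ℕ) : Prop :=
  ∀ (X : ℕ → ℕ) (t : ℕ), 1 ≤ t →
    (∀ s, 1 ≤ s → s ≤ t → outSeq g X t ≠ X s) ∧
    (∀ s, 1 ≤ s → s < t → outSeq g X t ≠ outSeq g X s)

/-- A randomized generator: a probability space `(Ω, P)` of seeds together with a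
measurable family of deterministic (valid) generators. -/
structure RandGen where
  Ω : Type
  mΩ : MeasurableSpace Ω
  P : @Measure Ω mΩ
  prob : @IsProbabilityMeasure Ω mΩ P
  gen : Ω → List ℕ → ℕ
  valid : ∀ ω, ValidGen (gen ω)
  meas : ∀ l : List ℕ, @Measurable Ω ℕ mΩ inferInstance (fun ω => gen ω l)

/-- `k_j`: the `j`-th smallest element of `K` (for `j ≥ 1`). -/
def nthElem (K : Set ℕ) (j : ℕ) : ℕ := Nat.nth (· ∈ K) (j - 1)

/-- `K_i = {k_1, …, k_i}`: the `i` smallest elements of `K`. -/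
def prefixSet (K : Set ℕ) (i : ℕ) : Finset ℕ := (Finset.Icc 1 i).image (nthElem K)

/-- Timely element-wise density `μ^el_i(𝒜(X), K, D)`. -/
def muEl (g : List ℕ → ℕ) (X : ℕ → ℕ) (K : Set ℕ) (D : ℕ → ℕ) (i : ℕ) : ℝ :=
  (∑ j ∈ Finset.Icc 1 i, if nthElem K j ∈ outUpTo g X (D j) then (1 : ℝ) else 0) / i

/-- Prefix-wise density `μ^pfx_i(𝒜(X), K, D) = |𝒜(X)_{D(i)} ∩ K_i| / i`. -/
def muPfx (g : List ℕ → ℕ) (X : ℕ → ℕ) (K : Set ℕ) (D : ℕ → ℕ) (i : ℕ) : ℝ :=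
  ((outUpTo g X (D i) ∩ prefixSet K i).card : ℝ) / i

/-- The number of hallucinations `|𝒜(X)_t \ K|` of a deterministic generator. -/
def hallucCount (g : List ℕ → ℕ) (X : ℕ → ℕ) (K : Set ℕ) (t : ℕ) : ℕ :=
  ((outUpTo g X t).filter fun n => n ∉ K).card

/-- The hallucination rate `H_𝒜^{ℒ,K,X}(t) = 𝔼[|𝒜(X)_t \ K| / t]`,
the expectation being over the internal randomness (the seed). -/
def hallucRate (A : RandGen) (X : ℕ → ℕ) (K : Set ℕ) (t : ℕ) : ℝ :=
  ∫ ω, (hallucCount (A.gen ω) X K t : ℝ) / t ∂A.P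

/-- `E ∈ ℰ(K)`: a total enumeration (with possible repetitions) of `K`. -/
def IsEnumOf (E : ℕ → ℕ) (K : Set ℕ) : Prop :=
  (∀ t, 1 ≤ t → E t ∈ K) ∧ ∀ k ∈ K, ∃ t, 1 ≤ t ∧ E t = k

/-- A countable collection of languages (infinite sets of strings). -/
def IsLangCollection (L : Set (Set ℕ)) : Prop :=
  L.Countable ∧ ∀ K ∈ L, K.Infinite

/-- Generalized inverse `D⁻¹(t) = min {n ≥ 1 : D(n) ≥ t}`. -/
def Dinv (D : ℕ → ℕ) (t : ℕ) : ℕ := sInf {n | 1 ≤ n ∧ t ≤ D n}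

/-- A feasible profile `(D, H)`: `D` is a monotone nondecreasing, discrete convex
(`D(m+1) − D(m) ≥ D(m) − D(m−1)`), superlinear deadline function, and `H` is a
nonnegative monotone nonincreasing vanishing function with `t·H(t)/D⁻¹(t) → ∞`. -/
def FeasibleProfile (D : ℕ → ℕ) (H : ℕ → ℝ) : Prop :=
  (∀ i, 1 ≤ i → 1 ≤ D i) ∧
  (∀ m n, 1 ≤ m → m ≤ n → D m ≤ D n) ∧
  (∀ m, 2 ≤ m → D m + D m ≤ D (m + 1) + D (m - 1)) ∧
  Tendsto (fun i : ℕ => (D i : ℝ) / i) atTop atTop ∧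
  (∀ t, 0 ≤ H t) ∧
  (∀ s t, 1 ≤ s → s ≤ t → H t ≤ H s) ∧
  Tendsto H atTop (nhds 0) ∧
  Tendsto (fun t : ℕ => (t : ℝ) * H t / (Dinv D t : ℝ)) atTop atTop


/-- A measure-zero chain: a nested family `L^1 ⊆ L^2 ⊆ ⋯` of languages whose union is
the language `L^∞` and such that each `L^j` has vanishing lower density inside the
ordered prefixes of `L^∞`. -/
def MeasureZeroChain (Linf : Set ℕ) (Lj : ℕ → Set ℕ) : Prop :=
  Linf.Infinite ∧ (∀ j, 1 ≤ j → (Lj j).Infinite) ∧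
  (∀ j, 1 ≤ j → Lj j ⊆ Lj (j + 1)) ∧
  (∀ j, 1 ≤ j → Lj j ⊆ Linf) ∧
  (⋃ j ∈ {j : ℕ | 1 ≤ j}, Lj j) = Linf ∧
  (∀ j, 1 ≤ j →
    liminf (fun i =>
      (((prefixSet Linf i).filter fun k => k ∈ Lj j).card : ℝ) / i) atTop = 0)

section Stmt7Aux

lemma aux_nthElem_mem {K : Set ℕ} (hK : K.Infinite) (j : ℕ) : nthElem K j ∈ K :=
  Nat.nth_mem_of_infinite hK (j - 1)

lemma aux_nthElem_inj {K : Set ℕ} (hK : K.Infinite) {a b : ℕ} (ha : 1 ≤ a) (hb : 1 ≤ b)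
    (h : nthElem K a = nthElem K b) : a = b := by
  have := Nat.nth_injective hK h
  omega

lemma aux_mem_prefixSet {K : Set ℕ} {i x : ℕ} :
    x ∈ prefixSet K i ↔ ∃ j, 1 ≤ j ∧ j ≤ i ∧ nthElem K j = x := by
  simp [prefixSet, Finset.mem_image, Finset.mem_Icc, and_assoc]

lemma aux_card_prefixSet_le (K : Set ℕ) (i : ℕ) : (prefixSet K i).card ≤ i := by
  calc (prefixSet K i).card ≤ (Finset.Icc 1 i).card := Finset.card_image_le
    _ = i := by rw [Nat.card_Icc]; omega

lemma aux_outUpTo_mono (g : List ℕ → ℕ) (X : ℕ → ℕ) {s t : ℕ} (h : s ≤ t) :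
    outUpTo g X s ⊆ outUpTo g X t :=
  Finset.image_subset_image (Finset.Icc_subset_Icc_right h)

lemma aux_card_outUpTo_le (g : List ℕ → ℕ) (X : ℕ → ℕ) (t : ℕ) :
    (outUpTo g X t).card ≤ t := by
  calc (outUpTo g X t).card ≤ (Finset.Icc 1 t).card := Finset.card_image_le
    _ = t := by rw [Nat.card_Icc]; omega

lemma aux_outSeq_congr {g : List ℕ → ℕ} {X Y : ℕ → ℕ} {t : ℕ}
    (h : ∀ s, 1 ≤ s → s ≤ t → X s = Y s) : outSeq g X t = outSeq g Y t := by
  unfold outSeq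
  congr 1
  refine List.map_congr_left fun s hs => ?_
  rw [List.mem_range] at hs
  exact h (s + 1) (by omega) (by omega)

lemma aux_outUpTo_congr {g : List ℕ → ℕ} {X Y : ℕ → ℕ} {T t : ℕ}
    (h : ∀ s, 1 ≤ s → s ≤ T → X s = Y s) (ht : t ≤ T) :
    outUpTo g X t = outUpTo g Y t := by
  unfold outUpTo
  refine Finset.image_congr fun s hs => ?_
  simp only [Finset.coe_Icc, Set.mem_Icc] at hs
  exact aux_outSeq_congr fun u hu1 hu2 => h u hu1 (le_trans (le_trans hu2 hs.2) ht)

lemma aux_outSeq_injOn {g : List ℕ → ℕ} (hg : ValidGen g) (X : ℕ → ℕ) (t : ℕ) :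
    Set.InjOn (outSeq g X) (Finset.Icc 1 t) := by
  intro a ha b hb hab
  simp only [Finset.coe_Icc, Set.mem_Icc] at ha hb
  by_contra hne
  rcases Nat.lt_or_ge a b with h | h
  · exact ((hg X b hb.1).2 a ha.1 h) hab.symm
  · have h' : b < a := by omega
    exact ((hg X a ha.1).2 b hb.1 h') hab

lemma aux_hallucCount_eq {g : List ℕ → ℕ} (hg : ValidGen g) (X : ℕ → ℕ) (K : Set ℕ) (t : ℕ) :
    hallucCount g X K t = ((Finset.Icc 1 t).filter fun s => outSeq g X s ∉ K).card := by
  unfold hallucCount outUpTo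
  rw [Finset.filter_image]
  exact Finset.card_image_of_injOn ((aux_outSeq_injOn hg X t).mono (by
    intro x hx
    simp only [Finset.coe_filter, Set.mem_setOf_eq] at hx
    exact hx.1))

lemma aux_hallucCount_cast {g : List ℕ → ℕ} (hg : ValidGen g) (X : ℕ → ℕ) (K : Set ℕ) (t : ℕ) :
    (hallucCount g X K t : ℝ)
      = ∑ s ∈ Finset.Icc 1 t, if outSeq g X s ∉ K then (1 : ℝ) else 0 := by
  rw [aux_hallucCount_eq hg, Finset.sum_boole]

lemma aux_hallucCount_le (g : List ℕ → ℕ) (X : ℕ → ℕ) (K : Set ℕ) (t : ℕ) :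
    hallucCount g X K t ≤ t :=
  le_trans (Finset.card_filter_le _ _) (aux_card_outUpTo_le g X t)

lemma aux_muPfx_nonneg (g : List ℕ → ℕ) (X : ℕ → ℕ) (K : Set ℕ) (D : ℕ → ℕ) (i : ℕ) :
    0 ≤ muPfx g X K D i :=
  div_nonneg (Nat.cast_nonneg _) (Nat.cast_nonneg _)

lemma aux_muPfx_le_one (g : List ℕ → ℕ) (X : ℕ → ℕ) (K : Set ℕ) (D : ℕ → ℕ) (i : ℕ) :
    muPfx g X K D i ≤ 1 := by
  unfold muPfx
  rcases Nat.eq_zero_or_pos i with h | h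
  · simp [h]
  · rw [div_le_one (by exact_mod_cast h)]
    exact_mod_cast le_trans (Finset.card_le_card Finset.inter_subset_right)
      (aux_card_prefixSet_le K i)

lemma aux_muEl_nonneg (g : List ℕ → ℕ) (X : ℕ → ℕ) (K : Set ℕ) (D : ℕ → ℕ) (i : ℕ) :
    0 ≤ muEl g X K D i := by
  apply div_nonneg _ (Nat.cast_nonneg _)
  exact Finset.sum_nonneg fun j _ => by positivity

lemma aux_muEl_le_muPfx (g : List ℕ → ℕ) (X : ℕ → ℕ) {K : Set ℕ} (hK : K.Infinite)
    (D : ℕ → ℕ) (hDmono : ∀ m n, 1 ≤ m → m ≤ n → D m ≤ D n) (i : ℕ) :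
    muEl g X K D i ≤ muPfx g X K D i := by
  rcases Nat.eq_zero_or_pos i with h | h
  · subst h
    have : muEl g X K D 0 = 0 := by
      simp [muEl]
    rw [this]
    exact aux_muPfx_nonneg g X K D 0
  · unfold muEl muPfx
    apply div_le_div_of_nonneg_right _ (Nat.cast_nonneg i)
    rw [Finset.sum_boole]
    refine Nat.cast_le.mpr (Finset.card_le_card_of_injOn (nthElem K) ?_ ?_)
    · intro j hj
      simp only [Finset.mem_coe, Finset.mem_filter, Finset.mem_Icc] at hj ⊢
      refine Finset.mem_inter.mpr ⟨?_, aux_mem_prefixSet.mpr ⟨j, hj.1.1, hj.1.2, rfl⟩⟩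
      exact aux_outUpTo_mono g X (hDmono j i hj.1.1 hj.1.2) hj.2
    · intro a ha b hb hab
      simp only [Finset.coe_filter, Set.mem_setOf_eq, Finset.mem_Icc] at ha hb
      exact aux_nthElem_inj hK ha.1.1 hb.1.1 hab

lemma aux_liminf_eq_zero {f : ℕ → ℝ} (h0 : ∀ i, 0 ≤ f i) (h1 : ∀ i, f i ≤ 1)
    (h : ∀ ε : ℝ, 0 < ε → ∀ N : ℕ, ∃ i, N ≤ i ∧ f i ≤ ε) : liminf f atTop = 0 := by
  have hb : IsBoundedUnder (· ≥ ·) atTop f := isBoundedUnder_of ⟨0, h0⟩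
  have hcob : IsCoboundedUnder (· ≥ ·) atTop f :=
    isCoboundedUnder_ge_of_eventually_le atTop (Eventually.of_forall h1)
  have hle : ∀ ε : ℝ, 0 < ε → liminf f atTop ≤ ε := by
    intro ε hε
    refine liminf_le_of_frequently_le ?_ hb
    rw [frequently_atTop]
    intro N
    obtain ⟨i, hi1, hi2⟩ := h ε hε N
    exact ⟨i, hi1, hi2⟩
  have h2 : liminf f atTop ≤ 0 := by
    by_contra h'
    push_neg at h'
    have := hle (liminf f atTop / 2) (by linarith)
    linarith
  exact le_antisymm h2 (le_liminf_of_le hcob (Eventually.of_forall h0))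

lemma aux_liminf_eq_zero_of_le {f g : ℕ → ℝ} (h0 : ∀ i, 0 ≤ f i) (hfg : ∀ i, f i ≤ g i)
    (h1 : ∀ i, g i ≤ 1) (hg : liminf g atTop = 0) : liminf f atTop = 0 := by
  have hcobf : IsCoboundedUnder (· ≥ ·) atTop f :=
    isCoboundedUnder_ge_of_eventually_le atTop
      (Eventually.of_forall fun i => le_trans (hfg i) (h1 i))
  have hbf : IsBoundedUnder (· ≥ ·) atTop f := isBoundedUnder_of ⟨0, h0⟩
  have hcobg : IsCoboundedUnder (· ≥ ·) atTop g :=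
    isCoboundedUnder_ge_of_eventually_le atTop (Eventually.of_forall h1)
  have hlim := liminf_le_liminf (Eventually.of_forall hfg) hbf hcobg
  rw [hg] at hlim
  exact le_antisymm hlim (le_liminf_of_le hcobf (Eventually.of_forall h0))

lemma aux_card_inter_le (g : List ℕ → ℕ) (X : ℕ → ℕ) (K Kj : Set ℕ) (T i : ℕ) :
    (outUpTo g X T ∩ prefixSet K i).card
      ≤ hallucCount g X Kj T + ((prefixSet K i).filter fun k => k ∈ Kj).card := by
  unfold hallucCount
  refine le_trans (Finset.card_le_card ?_) (Finset.card_union_le _ _)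
  intro x hx
  rw [Finset.mem_inter] at hx
  rw [Finset.mem_union]
  by_cases hxj : x ∈ Kj
  · exact Or.inr (Finset.mem_filter.mpr ⟨hx.2, hxj⟩)
  · exact Or.inl (Finset.mem_filter.mpr ⟨hx.1, hxj⟩)

lemma aux_meas_hallucCount (A : RandGen) (X : ℕ → ℕ) (K : Set ℕ) (t : ℕ) :
    @Measurable A.Ω ℝ A.mΩ _ (fun ω => (hallucCount (A.gen ω) X K t : ℝ)) := by
  letI := A.mΩ
  have heq : (fun ω => (hallucCount (A.gen ω) X K t : ℝ))
      = fun ω => ∑ s ∈ Finset.Icc 1 t, if outSeq (A.gen ω) X s ∉ K then (1:ℝ) else 0 := by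
    funext ω; exact aux_hallucCount_cast (A.valid ω) X K t
  rw [heq]
  refine Finset.measurable_sum _ fun s _ => ?_
  refine Measurable.ite ?_ measurable_const measurable_const
  have hm : Measurable fun ω => outSeq (A.gen ω) X s := A.meas _
  exact hm (MeasurableSet.of_discrete (s := {n | n ∉ K}))

lemma aux_chain_mono {Linf : Set ℕ} {Lj : ℕ → Set ℕ} (hchain : MeasureZeroChain Linf Lj) :
    ∀ a b, 1 ≤ a → a ≤ b → Lj a ⊆ Lj b := by
  intro a b ha hab
  induction b, hab using Nat.le_induction with
  | base => exact subset_rfl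
  | succ n hn ih => exact subset_trans ih (hchain.2.2.1 n (le_trans ha hn))


end Stmt7Aux

/-- Any countable collection containing a measure-zero chain witnesses the
hallucination barrier: a generator whose hallucination rate on the collection is
`o(D⁻¹(t)/t)` admits a total enumeration `X^∞` of `L^∞` on which, almost surely, the
timely prefix-wise (hence also element-wise) lower density vanishes. -/
theorem stmt7 (D : ℕ → ℕ) (hD1 : ∀ i, 1 ≤ i → 1 ≤ D i)
    (hDmono : ∀ m n, 1 ≤ m → m ≤ n → D m ≤ D n)
    (L : Set (Set ℕ)) (hL : IsLangCollection L)
    (Linf : Set ℕ) (Lj : ℕ → Set ℕ) (hchain : MeasureZeroChain Linf Lj)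
    (hLinf : Linf ∈ L) (hLj : ∀ j, 1 ≤ j → Lj j ∈ L)
    (A : RandGen)
    (hhalluc : ∀ ε : ℝ, 0 < ε → ∃ T, ∀ t, T ≤ t →
      ∀ K ∈ L, ∀ E : ℕ → ℕ, IsEnumOf E K →
        hallucRate A E K t ≤ ε * (Dinv D t : ℝ) / t) :
    ∃ X : ℕ → ℕ, IsEnumOf X Linf ∧
      ∀ᵐ ω ∂A.P,
        liminf (fun i => muPfx (A.gen ω) X Linf D i) atTop = 0 ∧
        liminf (fun i => muEl (A.gen ω) X Linf D i) atTop = 0 := by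
  classical
  letI : MeasurableSpace A.Ω := A.mΩ
  haveI : IsProbabilityMeasure A.P := A.prob
  have hI : Linf.Infinite := hchain.1
  have hJinf : ∀ j, 1 ≤ j → (Lj j).Infinite := hchain.2.1
  have hU : (⋃ j ∈ {j : ℕ | 1 ≤ j}, Lj j) = Linf := hchain.2.2.2.2.1
  have hd : ∀ j, 1 ≤ j →
      liminf (fun i =>
        (((prefixSet Linf i).filter fun k => k ∈ Lj j).card : ℝ) / i) atTop = 0 :=
    hchain.2.2.2.2.2
  have hdle1 : ∀ (j i : ℕ),
      (((prefixSet Linf i).filter fun k => k ∈ Lj j).card : ℝ) / i ≤ 1 := by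
    intro j i
    rcases Nat.eq_zero_or_pos i with h | h
    · simp [h]
    · rw [div_le_one (by exact_mod_cast h)]
      exact_mod_cast le_trans (Finset.card_filter_le _ _) (aux_card_prefixSet_le Linf i)
  by_cases hbound : ∃ B, ∀ n, D n ≤ B
  · -- trivial case: bounded deadlines
    obtain ⟨B, hB⟩ := hbound
    refine ⟨fun t => nthElem Linf t, ⟨fun t _ => aux_nthElem_mem hI t, ?_⟩, ?_⟩
    · intro x hx
      refine ⟨Nat.count (· ∈ Linf) x + 1, by omega, ?_⟩
      show Nat.nth (· ∈ Linf) (Nat.count (· ∈ Linf) x + 1 - 1) = x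
      simpa using Nat.nth_count hx
    · refine Eventually.of_forall fun ω => ?_
      have hpfx : liminf (fun i => muPfx (A.gen ω) (fun t => nthElem Linf t) Linf D i)
          atTop = 0 := by
        apply aux_liminf_eq_zero (fun _ => aux_muPfx_nonneg _ _ _ _ _)
          (fun _ => aux_muPfx_le_one _ _ _ _ _)
        intro ε hε N
        refine ⟨max N (Nat.ceil ((B : ℝ)/ε) + 1), le_max_left _ _, ?_⟩
        set m := max N (Nat.ceil ((B : ℝ)/ε) + 1) with hm
        have hm1 : Nat.ceil ((B : ℝ)/ε) + 1 ≤ m := le_max_right _ _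
        have hmpos : (0:ℝ) < m := by
          have : 1 ≤ m := by omega
          exact_mod_cast this
        have h1 : muPfx (A.gen ω) (fun t => nthElem Linf t) Linf D m ≤ (B : ℝ) / m := by
          unfold muPfx
          apply div_le_div_of_nonneg_right _ (Nat.cast_nonneg m)
          have : (outUpTo (A.gen ω) (fun t => nthElem Linf t) (D m) ∩ prefixSet Linf m).card
              ≤ B := le_trans (Finset.card_le_card Finset.inter_subset_left)
            (le_trans (aux_card_outUpTo_le _ _ _) (hB m))
          exact_mod_cast this
        have h2 : (B : ℝ) / m ≤ ε := by
          rw [div_le_iff₀ hmpos]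
          have hc : (B : ℝ)/ε ≤ (Nat.ceil ((B : ℝ)/ε) : ℝ) := Nat.le_ceil _
          have hc2 : (Nat.ceil ((B : ℝ)/ε) : ℝ) + 1 ≤ (m : ℝ) := by exact_mod_cast hm1
          rw [div_le_iff₀ hε] at hc
          nlinarith
        linarith
      refine ⟨hpfx, aux_liminf_eq_zero_of_le (fun _ => aux_muEl_nonneg _ _ _ _ _)
        (fun i => aux_muEl_le_muPfx _ _ hI D hDmono i)
        (fun _ => aux_muPfx_le_one _ _ _ _ _) hpfx⟩
  · -- main case: unbounded deadlines
    push_neg at hbound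
    have hDev : ∀ B, ∃ n, 1 ≤ n ∧ ∀ m, n ≤ m → B ≤ D m := by
      intro B
      obtain ⟨n, hn⟩ := hbound (max B (D 0))
      have hn1 : 1 ≤ n := by
        rcases Nat.eq_zero_or_pos n with h | h
        · subst h; omega
        · exact h
      exact ⟨n, hn1, fun m hm => le_trans (by omega) (hDmono n m hn1 hm)⟩
    -- levels φ r containing the first r elements of Linf
    have hφex : ∀ r, ∃ j, 1 ≤ j ∧ ∀ m, 1 ≤ m → m ≤ r → nthElem Linf m ∈ Lj j := by
      intro r
      induction r with
      | zero => exact ⟨1, le_refl 1, fun m hm1 hm0 => absurd (le_trans hm1 hm0) (by omega)⟩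
      | succ n ih =>
        obtain ⟨j, hj1, hjm⟩ := ih
        have hmem : nthElem Linf (n+1) ∈ ⋃ j ∈ {j : ℕ | 1 ≤ j}, Lj j := by
          rw [hU]; exact aux_nthElem_mem hI (n+1)
        simp only [Set.mem_iUnion, Set.mem_setOf_eq] at hmem
        obtain ⟨j', hj'1, hj'mem⟩ := hmem
        refine ⟨max j j', le_trans hj1 (le_max_left _ _), fun m hm1 hmn => ?_⟩
        rcases Nat.lt_or_ge m (n+1) with h | h
        · exact aux_chain_mono hchain j (max j j') hj1 (le_max_left _ _)
            (hjm m hm1 (by omega))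
        · have : m = n + 1 := by omega
          subst this
          exact aux_chain_mono hchain j' (max j j') hj'1 (le_max_right _ _) hj'mem
    choose φ hφ1 hφmem using hφex
    -- error tolerances and thresholds
    set eps : ℕ → ℝ := fun r => (1/2)^r / r with hepsdef
    have hεpos : ∀ r, 1 ≤ r → 0 < eps r := by
      intro r hr
      apply div_pos (by positivity)
      exact_mod_cast hr
    have hτex : ∀ r, ∃ T, 1 ≤ r → ∀ t, T ≤ t → ∀ K ∈ L, ∀ E : ℕ → ℕ, IsEnumOf E K →
        hallucRate A E K t ≤ eps r * (Dinv D t : ℝ) / t := by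
      intro r
      by_cases h1r : 1 ≤ r
      · obtain ⟨T, hT⟩ := hhalluc (eps r) (hεpos r h1r)
        exact ⟨T, fun _ => hT⟩
      · exact ⟨0, fun h => absurd h h1r⟩
    choose τ hτ using hτex
    -- choice of checkpoints i r
    have hiex : ∀ r, ∃ i, 1 ≤ i ∧ (1 ≤ r → (r ≤ i ∧ τ r ≤ D i ∧
        (((prefixSet Linf i).filter fun k => k ∈ Lj (φ r)).card : ℝ) / i < 1/r)) := by
      intro r
      by_cases h1r : 1 ≤ r
      · have hfreq : ∃ᶠ n in atTop,
            (((prefixSet Linf n).filter fun k => k ∈ Lj (φ r)).card : ℝ) / n < 1/r := by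
          apply frequently_lt_of_liminf_lt
          · exact isCoboundedUnder_ge_of_eventually_le atTop
              (Eventually.of_forall fun n => hdle1 (φ r) n)
          · rw [hd (φ r) (hφ1 r)]
            positivity
        have hev : ∀ᶠ (n : ℕ) in atTop, 1 ≤ n ∧ r ≤ n ∧ τ r ≤ D n := by
          obtain ⟨n₀, hn₀1, hn₀⟩ := hDev (τ r)
          filter_upwards [eventually_ge_atTop (max n₀ (max r 1))] with n hn
          exact ⟨by omega, by omega, hn₀ n (by omega)⟩
        obtain ⟨n, hfr, hn1, hnr, hnτ⟩ := (hfreq.and_eventually hev).exists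
        exact ⟨n, hn1, fun _ => ⟨hnr, hnτ, hfr⟩⟩
      · exact ⟨1, le_refl 1, fun h => absurd h h1r⟩
    choose i hi1 hispec using hiex
    -- block end positions
    set T : ℕ → ℕ := fun r => r + (Finset.Icc 1 r).sup fun m => D (i m) with hTdef
    have hTmono : StrictMono T := by
      apply strictMono_nat_of_lt_succ
      intro n
      have hsup : (Finset.Icc 1 n).sup (fun m => D (i m))
          ≤ (Finset.Icc 1 (n+1)).sup fun m => D (i m) :=
        Finset.sup_mono (Finset.Icc_subset_Icc_right (by omega))
      simp only [hTdef]
      omega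
    have hT0 : T 0 = 0 := by simp [hTdef]
    have hDT : ∀ r, 1 ≤ r → D (i r) ≤ T r := by
      intro r hr
      have : D (i r) ≤ (Finset.Icc 1 r).sup fun m => D (i m) :=
        Finset.le_sup (f := fun m => D (i m)) (Finset.mem_Icc.mpr ⟨hr, le_refl r⟩)
      simp only [hTdef]
      omega
    -- the enumeration X
    set X : ℕ → ℕ := fun s =>
      if h : ∃ r, s = T r + 1 then nthElem Linf (Nat.find h + 1) else nthElem Linf 1
      with hXdef
    have hXform : ∀ s, ∃ m, 1 ≤ m ∧ X s = nthElem Linf m := by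
      intro s
      simp only [hXdef]
      by_cases h : ∃ r, s = T r + 1
      · rw [dif_pos h]; exact ⟨Nat.find h + 1, by omega, rfl⟩
      · rw [dif_neg h]; exact ⟨1, le_refl 1, rfl⟩
    have hXblock : ∀ r, X (T r + 1) = nthElem Linf (r + 1) := by
      intro r
      have hex : ∃ r', T r + 1 = T r' + 1 := ⟨r, rfl⟩
      simp only [hXdef]
      rw [dif_pos hex]
      have hspec : T r + 1 = T (Nat.find hex) + 1 := Nat.find_spec hex
      have : Nat.find hex = r := hTmono.injective (by omega)
      rw [this]
    have hXprefix : ∀ r s, 1 ≤ s → s ≤ T r →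
        ∃ m, 1 ≤ m ∧ m ≤ r ∧ X s = nthElem Linf m := by
      intro r s hs1 hsT
      have hr1 : 1 ≤ r := by
        by_contra h
        have : r = 0 := by omega
        subst this
        omega
      simp only [hXdef]
      by_cases h : ∃ r', s = T r' + 1
      · rw [dif_pos h]
        have hspec : s = T (Nat.find h) + 1 := Nat.find_spec h
        have hlt : T (Nat.find h) < T r := by omega
        have : Nat.find h < r := hTmono.lt_iff_lt.mp hlt
        exact ⟨Nat.find h + 1, by omega, by omega, rfl⟩
      · rw [dif_neg h]
        exact ⟨1, le_refl 1, hr1, rfl⟩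
    have hXenum : IsEnumOf X Linf := by
      constructor
      · intro t _
        obtain ⟨m, hm1, hm2⟩ := hXform t
        rw [hm2]
        exact aux_nthElem_mem hI m
      · intro x hx
        refine ⟨T (Nat.count (· ∈ Linf) x) + 1, by omega, ?_⟩
        rw [hXblock]
        show Nat.nth (· ∈ Linf) (Nat.count (· ∈ Linf) x + 1 - 1) = x
        simpa using Nat.nth_count hx
    -- the auxiliary full enumerations of Lj (φ r)
    set Efun : ℕ → ℕ → ℕ := fun r s =>
      if s ≤ D (i r) then X s else nthElem (Lj (φ r)) (s - D (i r)) with hEdef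
    have hXsame : ∀ r s, 1 ≤ s → s ≤ D (i r) → X s = Efun r s := by
      intro r s _ hsle
      simp only [hEdef]
      rw [if_pos hsle]
    have houtEq : ∀ r ω, 1 ≤ r →
        outUpTo (A.gen ω) X (D (i r)) = outUpTo (A.gen ω) (Efun r) (D (i r)) := by
      intro r ω _
      exact aux_outUpTo_congr (fun s h1 h2 => hXsame r s h1 h2) (le_refl _)
    have hEenum : ∀ r, 1 ≤ r → IsEnumOf (Efun r) (Lj (φ r)) := by
      intro r hr
      constructor
      · intro s hs1
        simp only [hEdef]
        by_cases hsle : s ≤ D (i r)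
        · rw [if_pos hsle]
          obtain ⟨m, hm1, hm2, hm3⟩ := hXprefix r s hs1 (le_trans hsle (hDT r hr))
          rw [hm3]
          exact hφmem r m hm1 hm2
        · rw [if_neg hsle]
          exact aux_nthElem_mem (hJinf (φ r) (hφ1 r)) _
      · intro x hx
        refine ⟨D (i r) + (Nat.count (· ∈ Lj (φ r)) x + 1), by omega, ?_⟩
        simp only [hEdef]
        rw [if_neg (by omega)]
        have : D (i r) + (Nat.count (· ∈ Lj (φ r)) x + 1) - D (i r)
            = Nat.count (· ∈ Lj (φ r)) x + 1 := by omega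
        rw [this]
        show Nat.nth (· ∈ Lj (φ r)) (Nat.count (· ∈ Lj (φ r)) x + 1 - 1) = x
        simpa using Nat.nth_count hx
    -- the hallucination-counting random variables
    set F : ℕ → A.Ω → ℝ :=
      fun r ω => (hallucCount (A.gen ω) X (Lj (φ r)) (D (i r)) : ℝ) with hFdef
    have hFnonneg : ∀ r ω, 0 ≤ F r ω := fun r ω => Nat.cast_nonneg _
    have hFmeas : ∀ r, Measurable (F r) := fun r => aux_meas_hallucCount A X _ _
    have hFint : ∀ r, Integrable (F r) A.P := by
      intro r
      refine Integrable.mono' (integrable_const ((D (i r) : ℝ)))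
        (hFmeas r).aestronglyMeasurable (Eventually.of_forall fun ω => ?_)
      rw [Real.norm_eq_abs, abs_of_nonneg (hFnonneg r ω)]
      simp only [hFdef]
      exact_mod_cast aux_hallucCount_le _ _ _ _
    have hFbound : ∀ r, 1 ≤ r → ∫ ω, F r ω ∂A.P ≤ eps r * i r := by
      intro r hr
      obtain ⟨hri, hτi, hdensi⟩ := hispec r hr
      have hrate := hτ r hr (D (i r)) hτi (Lj (φ r)) (hLj (φ r) (hφ1 r))
        (Efun r) (hEenum r hr)
      have hFE : ∀ ω, F r ω = (hallucCount (A.gen ω) (Efun r) (Lj (φ r)) (D (i r)) : ℝ) := by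
        intro ω
        simp only [hFdef]
        unfold hallucCount
        rw [houtEq r ω hr]
      have htpos : (0:ℝ) < (D (i r) : ℝ) := by exact_mod_cast hD1 (i r) (hi1 r)
      have hrate2 : (∫ ω, F r ω ∂A.P) / (D (i r) : ℝ)
          ≤ eps r * (Dinv D (D (i r)) : ℝ) / (D (i r) : ℝ) := by
        have : hallucRate A (Efun r) (Lj (φ r)) (D (i r))
            = (∫ ω, F r ω ∂A.P) / (D (i r) : ℝ) := by
          unfold hallucRate
          rw [integral_div]
          congr 1
          exact integral_congr_ae (Eventually.of_forall fun ω => (hFE ω).symm)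
        rw [← this]
        exact hrate
      have hDinv : (Dinv D (D (i r)) : ℝ) ≤ (i r : ℝ) := by
        have : Dinv D (D (i r)) ≤ i r := Nat.sInf_le ⟨hi1 r, le_refl _⟩
        exact_mod_cast this
      have h1 : ∫ ω, F r ω ∂A.P ≤ eps r * (Dinv D (D (i r)) : ℝ) := by
        have := (div_le_div_iff_of_pos_right htpos).mp hrate2
        linarith [this]
      calc ∫ ω, F r ω ∂A.P ≤ eps r * (Dinv D (D (i r)) : ℝ) := h1
        _ ≤ eps r * i r := mul_le_mul_of_nonneg_left hDinv (le_of_lt (hεpos r hr))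
    -- the bad events and Borel-Cantelli
    set S : ℕ → Set A.Ω := fun r => {ω | (i r : ℝ)/(r : ℝ) ≤ F r ω} with hSdef
    have hμS : ∀ r, A.P (S r) ≤ ENNReal.ofReal ((1/2)^r) := by
      intro r
      rcases Nat.eq_zero_or_pos r with h0 | hr
      · subst h0
        simp only [pow_zero, ENNReal.ofReal_one]
        exact prob_le_one
      · have hmar := mul_meas_ge_le_integral_of_nonneg (μ := A.P)
          (Eventually.of_forall (hFnonneg r)) (hFint r) ((i r : ℝ)/(r : ℝ))
        have hipos : (0:ℝ) < (i r : ℝ) := by exact_mod_cast hi1 r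
        have hrpos : (0:ℝ) < (r : ℝ) := by exact_mod_cast hr
        have hpos : (0:ℝ) < (i r : ℝ)/(r : ℝ) := div_pos hipos hrpos
        have h2 : (i r : ℝ)/(r : ℝ) * (A.P (S r)).toReal ≤ eps r * i r :=
          le_trans hmar (hFbound r hr)
        have heq : eps r * (i r : ℝ) = (1/2:ℝ)^r * ((i r : ℝ)/(r : ℝ)) := by
          simp only [hepsdef]
          field_simp
        rw [heq] at h2
        have htoReal : (A.P (S r)).toReal ≤ (1/2)^r := by
          nlinarith [ENNReal.toReal_nonneg (a := A.P (S r))]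
        calc A.P (S r) = ENNReal.ofReal ((A.P (S r)).toReal) :=
              (ENNReal.ofReal_toReal (measure_ne_top _ _)).symm
          _ ≤ ENNReal.ofReal ((1/2)^r) := ENNReal.ofReal_le_ofReal htoReal
    have hsum : (∑' r, A.P (S r)) ≠ ⊤ := by
      have hle : (∑' r, A.P (S r)) ≤ ∑' r : ℕ, (2⁻¹ : ENNReal)^r := by
        apply ENNReal.tsum_le_tsum
        intro r
        refine le_trans (hμS r) (le_of_eq ?_)
        rw [ENNReal.ofReal_pow (by norm_num)]
        congr 1
        rw [show (1/2:ℝ) = (2:ℝ)⁻¹ by norm_num, ENNReal.ofReal_inv_of_pos (by norm_num)]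
        norm_num
      rw [ENNReal.tsum_geometric, ENNReal.one_sub_inv_two] at hle
      exact ne_top_of_le_ne_top (by simp) hle
    have hae : ∀ᵐ ω ∂A.P, ∀ᶠ r in atTop, ω ∉ S r := ae_eventually_notMem hsum
    -- conclusion
    refine ⟨X, hXenum, ?_⟩
    filter_upwards [hae] with ω hω
    obtain ⟨R, hR⟩ := eventually_atTop.mp hω
    have hpfx : liminf (fun n => muPfx (A.gen ω) X Linf D n) atTop = 0 := by
      apply aux_liminf_eq_zero (fun _ => aux_muPfx_nonneg _ _ _ _ _)
        (fun _ => aux_muPfx_le_one _ _ _ _ _)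
      intro ε hε N
      set r : ℕ := max R (max N (Nat.ceil (2/ε))) + 1 with hrdef
      have hr1 : 1 ≤ r := by omega
      obtain ⟨hri, hτi, hdensi⟩ := hispec r hr1
      refine ⟨i r, by omega, ?_⟩
      have hωr : ω ∉ S r := hR r (by omega)
      have hF : F r ω < (i r : ℝ)/(r : ℝ) := by
        simp only [hSdef, Set.mem_setOf_eq] at hωr
        exact not_le.mp hωr
      have hipos : (0:ℝ) < (i r : ℝ) := by exact_mod_cast hi1 r
      have hrpos : (0:ℝ) < (r : ℝ) := by exact_mod_cast hr1
      have hcard := aux_card_inter_le (A.gen ω) X Linf (Lj (φ r)) (D (i r)) (i r)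
      have hmu : muPfx (A.gen ω) X Linf D (i r)
          ≤ F r ω / (i r : ℝ)
            + (((prefixSet Linf (i r)).filter fun k => k ∈ Lj (φ r)).card : ℝ) / (i r : ℝ) := by
        unfold muPfx
        rw [← add_div]
        apply div_le_div_of_nonneg_right _ (Nat.cast_nonneg (i r))
        simp only [hFdef]
        push_cast
        exact_mod_cast hcard
      have h2 : F r ω / (i r : ℝ) < 1/(r : ℝ) := by
        rw [div_lt_div_iff₀ hipos hrpos, one_mul]
        calc F r ω * (r : ℝ) < ((i r : ℝ)/(r : ℝ)) * (r : ℝ) :=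
              mul_lt_mul_of_pos_right hF hrpos
          _ = (i r : ℝ) := div_mul_cancel₀ _ (ne_of_gt hrpos)
      have h4 : 2/(r : ℝ) ≤ ε := by
        have hceil : (2/ε : ℝ) ≤ (Nat.ceil (2/ε) : ℝ) := Nat.le_ceil _
        have hrge : (Nat.ceil (2/ε) : ℝ) < (r : ℝ) := by
          exact_mod_cast (by omega : Nat.ceil (2/ε) < r)
        rw [div_le_iff₀ hε] at hceil
        rw [div_le_iff₀ hrpos]
        nlinarith
      have hlt2 : muPfx (A.gen ω) X Linf D (i r) < 2/(r : ℝ) := by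
        have hadd := add_lt_add h2 hdensi
        rw [← add_div, ← add_div] at hadd
        have h11 : ((1:ℝ)+1)/(r:ℝ) = 2/(r:ℝ) := by norm_num
        rw [h11] at hadd
        rw [← add_div] at hmu
        exact lt_of_le_of_lt hmu hadd
      linarith
    exact ⟨hpfx, aux_liminf_eq_zero_of_le (fun _ => aux_muEl_nonneg _ _ _ _ _)
      (fun n => aux_muEl_le_muPfx _ _ hI D hDmono n)
      (fun _ => aux_muPfx_le_one _ _ _ _ _) hpfx⟩

end
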